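/- Let λ > 0 and p < 1, let A ∈ ℝ^{m×n} have spectral norm ‖A‖ < 1, let b ∈ ℝᵐ, and let {x^k} be the IPS sequence with arbitrary initializer x⁰. Then: (1) F_p(x^{k+1}) ≤ F_p(x^k) for all k, with strict inequality unless x^{k+1} = x^k; and (2) ‖x^{k+1} − x^k‖₂ → 0 as k → ∞. -/

import Mathlib

open MeasureTheory Filter
open scoped BigOperators

noncomputable section

/-- `l0 w` is the number of nonzero entries of `w`. -/
def l0 {n : ℕ} (w : Fin n → ℝ) : ℕ := (Finset.univ.filter fun i => w i ≠ 0).card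

/-- Euclidean (`ℓ²`) norm of a vector. -/
def l2 {k : ℕ} (v : Fin k → ℝ) : ℝ := Real.sqrt (∑ i, v i ^ 2)

/-- Restriction `h_T` of a vector to a finset `T` (zero outside `T`). -/
def restr {n : ℕ} (T : Finset (Fin n)) (h : Fin n → ℝ) : Fin n → ℝ :=
  fun i => if i ∈ T then h i else 0

/-- Unique Representation Property: every `m` columns of `A` are linearly independent. -/
def URP {m n : ℕ} (A : Matrix (Fin m) (Fin n) ℝ) : Prop :=
  ∀ S : Finset (Fin n), S.card = m →
    LinearIndependent ℝ (fun j : S => (fun i : Fin m => A i (j : Fin n)))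

/-- Conditions (I)-(II) on the penalty component `g`. -/
def PenaltyConds (g : ℝ → ℝ) : Prop :=
  g 0 = 0 ∧ (∀ w, g (-w) = g w) ∧ Continuous g ∧
    ((StrictMonoOn g (Set.Ioi 0) ∧ StrictConcaveOn ℝ (Set.Ioi 0) g) ∨
      (∃ γ : ℝ, 0 < γ ∧ StrictMonoOn g (Set.Ioc 0 γ) ∧
        StrictConcaveOn ℝ (Set.Ioc 0 γ) g ∧ ∀ w, γ ≤ w → g w = g γ))

/-- Spectral (`ℓ² → ℓ²` operator) norm of a matrix. -/
def specNorm {m n : ℕ} (A : Matrix (Fin m) (Fin n) ℝ) : ℝ :=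
  sSup {c | ∃ v : Fin n → ℝ, l2 v ≤ 1 ∧ c = l2 (A.mulVec v)}

/-- The `p`-shrinkage function `s_{λ,p}`. -/
def pshrinkFun (lam p t : ℝ) : ℝ :=
  if t ≤ 0 then 0 else max (t - lam ^ (2 - p) * t ^ (p - 1)) 0

/-- `f_p(x) = ∫₀ˣ s_{λ,p}(t) dt`. -/
def pf (lam p x : ℝ) : ℝ := ∫ t in (0 : ℝ)..x, pshrinkFun lam p t

/-- Legendre–Fenchel transform `f_p*(w) = sup_{x ≥ 0} (x·w − f_p(x))`. -/
def pfstar (lam p w : ℝ) : ℝ := sSup ((fun x => x * w - pf lam p x) '' Set.Ici 0)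

/-- The induced `p`-shrinkage penalty component `g_p`. -/
def gp (lam p w : ℝ) : ℝ := (pfstar lam p |w| - w ^ 2 / 2) / lam

/-- The induced `p`-shrinkage penalty `G_p`. -/
def Gp (lam p : ℝ) {n : ℕ} (w : Fin n → ℝ) : ℝ := ∑ i, gp lam p (w i)

/-- The `p`-shrinkage mapping `S_p`. -/
def Sp (lam p : ℝ) {n : ℕ} (x : Fin n → ℝ) : Fin n → ℝ :=
  fun i => pshrinkFun lam p |x i| * Real.sign (x i)

/-- The objective `F_p(x) = λ G_p(x) + ½‖Ax − b‖₂²`. -/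
def Fp (lam p : ℝ) {m n : ℕ} (A : Matrix (Fin m) (Fin n) ℝ) (b : Fin m → ℝ)
    (x : Fin n → ℝ) : ℝ :=
  lam * Gp lam p x + (1 / 2) * (l2 (A.mulVec x - b)) ^ 2

/-- Firm-thresholding penalty component. -/
def gfirm (μ w : ℝ) : ℝ := if |w| ≤ μ then |w| - w ^ 2 / (2 * μ) else μ / 2

/-- Firm-thresholding penalty. -/
def Gfirm (μ : ℝ) {n : ℕ} (w : Fin n → ℝ) : ℝ := ∑ i, gfirm μ (w i)

/-- The `m × m` submatrix `A_S` of the columns of `A` indexed by `S`. -/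
def colsub {m n : ℕ} (A : Matrix (Fin m) (Fin n) ℝ)
    (S : {S : Finset (Fin n) // S.card = m}) : Matrix (Fin m) (Fin m) ℝ :=
  Matrix.of fun i j => A i ((S.1.orderIsoOfFin S.2 j : Fin n))

/-- `α_S = ‖A_S⁻¹ b‖_{-∞}`. -/
def alphaS {m n : ℕ} (A : Matrix (Fin m) (Fin n) ℝ) (b : Fin m → ℝ)
    (S : {S : Finset (Fin n) // S.card = m}) : ℝ :=
  ⨅ i, |((colsub A S)⁻¹).mulVec b i|

/-- `β_S = ‖A_S⁻¹ b‖_∞`. -/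
def betaS {m n : ℕ} (A : Matrix (Fin m) (Fin n) ℝ) (b : Fin m → ℝ)
    (S : {S : Finset (Fin n) // S.card = m}) : ℝ :=
  ⨆ i, |((colsub A S)⁻¹).mulVec b i|

/-- `‖A_S⁻¹‖` (spectral norm). -/
def nrmInv {m n : ℕ} (A : Matrix (Fin m) (Fin n) ℝ)
    (S : {S : Finset (Fin n) // S.card = m}) : ℝ :=
  specNorm ((colsub A S)⁻¹)

namespace Stmt14Aux

/-! ### Scalar facts about the shrinkage function -/

lemma lamlam {lam p : ℝ} (hlam : 0 < lam) : lam ^ (2 - p) * lam ^ (p - 1) = lam := by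
  rw [← Real.rpow_add hlam, show (2 - p) + (p - 1) = (1 : ℝ) by ring, Real.rpow_one]

lemma pshrink_rep {lam p : ℝ} (hlam : 0 < lam) (hp : p < 1) (t : ℝ) :
    pshrinkFun lam p t = max (t - lam ^ (2 - p) * (max t lam) ^ (p - 1)) 0 := by
  unfold pshrinkFun
  rcases le_or_gt t 0 with h | h
  · rw [if_pos h, max_eq_right (h.trans hlam.le), lamlam hlam,
      max_eq_right (by linarith : t - lam ≤ 0)]
  · rw [if_neg (not_le.2 h)]
    rcases le_or_gt t lam with hle | hlt
    · rw [max_eq_right hle, lamlam hlam]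
      have h1 : t ^ (2 - p) ≤ lam ^ (2 - p) := Real.rpow_le_rpow h.le hle (by linarith)
      have h2 : (0 : ℝ) ≤ t ^ (p - 1) := Real.rpow_nonneg h.le _
      have h3 : t ^ (2 - p) * t ^ (p - 1) = t := by
        rw [← Real.rpow_add h, show (2 - p) + (p - 1) = (1 : ℝ) by ring, Real.rpow_one]
      have h4 : t ≤ lam ^ (2 - p) * t ^ (p - 1) := by
        calc t = t ^ (2 - p) * t ^ (p - 1) := h3.symm
          _ ≤ lam ^ (2 - p) * t ^ (p - 1) := mul_le_mul_of_nonneg_right h1 h2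
      rw [max_eq_right (by linarith : t - lam ^ (2 - p) * t ^ (p - 1) ≤ 0),
        max_eq_right (by linarith : t - lam ≤ 0)]
    · rw [max_eq_left hlt.le]

lemma s_nonneg {lam p : ℝ} (t : ℝ) : 0 ≤ pshrinkFun lam p t := by
  unfold pshrinkFun; split
  · exact le_rfl
  · exact le_max_right _ _

lemma s_zero {lam p : ℝ} : pshrinkFun lam p 0 = 0 := if_pos le_rfl

lemma s_mono {lam p : ℝ} (hlam : 0 < lam) (hp : p < 1) : Monotone (pshrinkFun lam p) := by
  intro a b hab
  rw [pshrink_rep hlam hp a, pshrink_rep hlam hp b]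
  refine max_le_max ?_ le_rfl
  have h1 : (max b lam) ^ (p - 1) ≤ (max a lam) ^ (p - 1) :=
    Real.rpow_le_rpow_of_nonpos (lt_of_lt_of_le hlam (le_max_right a lam))
      (max_le_max hab le_rfl) (by linarith)
  have h2 : (0 : ℝ) ≤ lam ^ (2 - p) := Real.rpow_nonneg hlam.le _
  have := mul_le_mul_of_nonneg_left h1 h2
  linarith

lemma s_le {lam p : ℝ} (hlam : 0 < lam) (hp : p < 1) (t : ℝ) (ht : 0 ≤ t) :
    pshrinkFun lam p t ≤ t := by
  rw [pshrink_rep hlam hp]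
  refine max_le ?_ ht
  have h1 : (0 : ℝ) ≤ lam ^ (2 - p) * (max t lam) ^ (p - 1) :=
    mul_nonneg (Real.rpow_nonneg hlam.le _)
      (Real.rpow_nonneg ((le_max_right t lam).trans' hlam.le) _)
  linarith

lemma s_ge {lam p : ℝ} (hlam : 0 < lam) (hp : p < 1) (t : ℝ) :
    t - lam ≤ pshrinkFun lam p t := by
  rw [pshrink_rep hlam hp]
  refine le_max_of_le_left ?_
  have h1 : (max t lam) ^ (p - 1) ≤ lam ^ (p - 1) :=
    Real.rpow_le_rpow_of_nonpos hlam (le_max_right t lam) (by linarith)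
  have h2 := mul_le_mul_of_nonneg_left h1 (Real.rpow_nonneg hlam.le (2 - p))
  rw [lamlam hlam] at h2
  linarith

lemma s_cont {lam p : ℝ} (hlam : 0 < lam) (hp : p < 1) :
    Continuous (pshrinkFun lam p) := by
  have hrep : pshrinkFun lam p =
      fun t => max (t - lam ^ (2 - p) * (max t lam) ^ (p - 1)) 0 :=
    funext (pshrink_rep hlam hp)
  rw [hrep]
  refine Continuous.max ?_ continuous_const
  refine Continuous.sub continuous_id (Continuous.mul continuous_const ?_)
  exact (continuous_id.max continuous_const).rpow_const
    (fun t => Or.inl (ne_of_gt (lt_of_lt_of_le hlam (le_max_right t lam))))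

/-! ### Facts about `pf` and `pfstar` -/

lemma s_intable {lam p : ℝ} (hlam : 0 < lam) (hp : p < 1) (a c : ℝ) :
    IntervalIntegrable (pshrinkFun lam p) MeasureTheory.volume a c :=
  (s_cont hlam hp).intervalIntegrable a c

lemma pf_sub {lam p : ℝ} (hlam : 0 < lam) (hp : p < 1) (x t : ℝ) :
    pf lam p t - pf lam p x = ∫ u in x..t, pshrinkFun lam p u := by
  unfold pf
  rw [← intervalIntegral.integral_add_adjacent_intervals (s_intable hlam hp 0 x)
    (s_intable hlam hp x t)]
  ring

lemma pf_le {lam p : ℝ} (hlam : 0 < lam) (hp : p < 1) (x : ℝ) (hx : 0 ≤ x) :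
    pf lam p x ≤ x ^ 2 / 2 := by
  have h := intervalIntegral.integral_mono_on (μ := MeasureTheory.volume) hx
    (s_intable hlam hp 0 x) (continuous_id'.intervalIntegrable 0 x)
    (fun t htt => s_le hlam hp t htt.1)
  rw [integral_id] at h
  unfold pf
  calc (∫ t in (0:ℝ)..x, pshrinkFun lam p t) ≤ (x ^ 2 - 0 ^ 2) / 2 := h
    _ = x ^ 2 / 2 := by ring

lemma pf_lb {lam p : ℝ} (hlam : 0 < lam) (hp : p < 1) (x : ℝ) (hx : 0 ≤ x) :
    x ^ 2 / 2 - lam * x ≤ pf lam p x := by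
  have h := intervalIntegral.integral_mono_on (μ := MeasureTheory.volume) hx
    ((continuous_id'.sub continuous_const).intervalIntegrable 0 x)
    (s_intable hlam hp 0 x) (fun t _ => s_ge hlam hp t)
  have heq : (∫ t in (0:ℝ)..x, (t - lam)) = x ^ 2 / 2 - lam * x := by
    rw [intervalIntegral.integral_sub (continuous_id'.intervalIntegrable 0 x)
      (intervalIntegrable_const), integral_id, intervalIntegral.integral_const]
    simp
    ring
  rw [← heq]
  exact h

lemma pf_nonneg {lam p : ℝ} (hlam : 0 < lam) (hp : p < 1) (x : ℝ) (hx : 0 ≤ x) :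
    0 ≤ pf lam p x :=
  intervalIntegral.integral_nonneg hx (fun u _ => s_nonneg u)

lemma max_prop {lam p : ℝ} (hlam : 0 < lam) (hp : p < 1) (t x : ℝ)
    (ht : 0 ≤ t) (hx : 0 ≤ x) :
    x * pshrinkFun lam p t - pf lam p x ≤ t * pshrinkFun lam p t - pf lam p t := by
  rcases le_total x t with h | h
  · have hint := intervalIntegral.integral_mono_on (μ := MeasureTheory.volume) h
      (s_intable hlam hp x t) (intervalIntegrable_const (c := pshrinkFun lam p t))
      (fun u hu => s_mono hlam hp hu.2)
    rw [intervalIntegral.integral_const, smul_eq_mul] at hint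
    have hps := pf_sub hlam hp x t
    have hexp : (t - x) * pshrinkFun lam p t
        = t * pshrinkFun lam p t - x * pshrinkFun lam p t := by ring
    linarith
  · have hint := intervalIntegral.integral_mono_on (μ := MeasureTheory.volume) h
      (intervalIntegrable_const (c := pshrinkFun lam p t))
      (s_intable hlam hp t x) (fun u hu => s_mono hlam hp hu.1)
    rw [intervalIntegral.integral_const, smul_eq_mul] at hint
    have hps := pf_sub hlam hp t x
    have hexp : (x - t) * pshrinkFun lam p t
        = x * pshrinkFun lam p t - t * pshrinkFun lam p t := by ring
    linarith

lemma pfstar_bdd {lam p : ℝ} (hlam : 0 < lam) (hp : p < 1) (w : ℝ) :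
    BddAbove ((fun x => x * w - pf lam p x) '' Set.Ici 0) := by
  refine ⟨(|w| + lam) ^ 2 / 2, ?_⟩
  rintro c ⟨x, hx, rfl⟩
  have hx' : (0:ℝ) ≤ x := hx
  have h1 := pf_lb hlam hp x hx'
  have h2 : x * w ≤ x * |w| := mul_le_mul_of_nonneg_left (le_abs_self w) hx'
  nlinarith [sq_nonneg (x - (|w| + lam)), abs_nonneg w]

lemma pfstar_ge {lam p : ℝ} (hlam : 0 < lam) (hp : p < 1) (w x : ℝ) (hx : 0 ≤ x) :
    x * w - pf lam p x ≤ pfstar lam p w :=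
  le_csSup (pfstar_bdd hlam hp w) ⟨x, hx, rfl⟩

lemma pfstar_eq {lam p : ℝ} (hlam : 0 < lam) (hp : p < 1) (t : ℝ) (ht : 0 ≤ t) :
    pfstar lam p (pshrinkFun lam p t) = t * pshrinkFun lam p t - pf lam p t := by
  refine le_antisymm ?_ (pfstar_ge hlam hp _ t ht)
  refine csSup_le ⟨t * pshrinkFun lam p t - pf lam p t, ⟨t, ht, rfl⟩⟩ ?_
  rintro c ⟨x, hx, rfl⟩
  exact max_prop hlam hp t x ht hx

lemma gp_nonneg {lam p : ℝ} (hlam : 0 < lam) (hp : p < 1) (w : ℝ) :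
    0 ≤ gp lam p w := by
  unfold gp
  apply div_nonneg _ hlam.le
  have h1 := pfstar_ge hlam hp |w| |w| (abs_nonneg w)
  have h2 := pf_le hlam hp |w| (abs_nonneg w)
  have h3 : |w| ^ 2 = w ^ 2 := sq_abs w
  nlinarith

lemma lam_gp {lam p : ℝ} (hlam : 0 < lam) (w : ℝ) :
    lam * gp lam p w = pfstar lam p |w| - w ^ 2 / 2 := by
  unfold gp
  rw [mul_comm, div_mul_cancel₀ _ hlam.ne']

lemma coord_min {lam p : ℝ} (hlam : 0 < lam) (hp : p < 1) (z w : ℝ) :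
    pfstar lam p |pshrinkFun lam p |z| * Real.sign z|
        - pshrinkFun lam p |z| * Real.sign z * z
      ≤ pfstar lam p |w| - w * z := by
  have ht : (0:ℝ) ≤ |z| := abs_nonneg z
  have hsn : (0:ℝ) ≤ pshrinkFun lam p |z| := s_nonneg _
  have habs : |pshrinkFun lam p (|z|) * Real.sign z| = pshrinkFun lam p |z| := by
    rcases lt_trichotomy z 0 with h | h | h
    · rw [Real.sign_of_neg h]; rw [mul_neg_one, abs_neg, abs_of_nonneg hsn]
    · subst h; simp [s_zero]
    · rw [Real.sign_of_pos h, mul_one, abs_of_nonneg hsn]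
  have hSz : pshrinkFun lam p (|z|) * Real.sign z * z = pshrinkFun lam p |z| * |z| := by
    rcases lt_trichotomy z 0 with h | h | h
    · rw [Real.sign_of_neg h, abs_of_neg h]; ring
    · subst h; simp
    · rw [Real.sign_of_pos h, abs_of_pos h]; ring
  rw [habs, hSz, pfstar_eq hlam hp |z| ht]
  have h1 := pfstar_ge hlam hp |w| |z| ht
  have h2 : w * z ≤ |w| * |z| := (le_abs_self (w * z)).trans (le_of_eq (abs_mul w z))
  linarith

/-! ### Vector algebra -/

def ip {k : ℕ} (u v : Fin k → ℝ) : ℝ := ∑ i, u i * v i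

def Q {k : ℕ} (v : Fin k → ℝ) : ℝ := ∑ i, v i ^ 2

lemma Q_nonneg {k : ℕ} (v : Fin k → ℝ) : 0 ≤ Q v :=
  Finset.sum_nonneg fun i _ => sq_nonneg _

lemma l2_sq {k : ℕ} (v : Fin k → ℝ) : l2 v ^ 2 = Q v :=
  Real.sq_sqrt (Q_nonneg v)

lemma l2_nonneg {k : ℕ} (v : Fin k → ℝ) : 0 ≤ l2 v := Real.sqrt_nonneg _

lemma ip_self {k : ℕ} (v : Fin k → ℝ) : ip v v = Q v := by
  unfold ip Q
  exact Finset.sum_congr rfl fun i _ => (sq (v i)).symm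

lemma ip_sub_right {k : ℕ} (u v w : Fin k → ℝ) : ip u (v - w) = ip u v - ip u w := by
  unfold ip
  rw [← Finset.sum_sub_distrib]
  exact Finset.sum_congr rfl fun i _ => by simp [Pi.sub_apply]; ring

lemma Q_sub {k : ℕ} (u v : Fin k → ℝ) : Q (u - v) = Q u - 2 * ip u v + Q v := by
  unfold Q ip
  have h : ∀ i ∈ Finset.univ (α := Fin k),
      (u i - v i) ^ 2 = (u i ^ 2 + v i ^ 2) - 2 * (u i * v i) := fun i _ => by ring
  calc (∑ i, ((u - v) i) ^ 2) = ∑ i, ((u i ^ 2 + v i ^ 2) - 2 * (u i * v i)) := by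
        refine Finset.sum_congr rfl fun i hi => ?_
        rw [Pi.sub_apply]; exact h i hi
    _ = (∑ i, u i ^ 2) - 2 * (∑ i, u i * v i) + (∑ i, v i ^ 2) := by
        rw [Finset.sum_sub_distrib, Finset.sum_add_distrib, ← Finset.mul_sum]; ring

lemma adj {m n : ℕ} (A : Matrix (Fin m) (Fin n) ℝ) (u : Fin n → ℝ) (v : Fin m → ℝ) :
    ip u (A.transpose.mulVec v) = ip (A.mulVec u) v := by
  unfold ip
  simp only [Matrix.mulVec, dotProduct, Matrix.transpose_apply, Finset.mul_sum,
    Finset.sum_mul]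
  rw [Finset.sum_comm]
  exact Finset.sum_congr rfl fun i _ => Finset.sum_congr rfl fun j _ => by ring

lemma quad_id {m n : ℕ} (A : Matrix (Fin m) (Fin n) ℝ) (b : Fin m → ℝ)
    (u y : Fin n → ℝ) :
    (-(1:ℝ)/2 * Q u + 1/2 * Q (A.mulVec u - b)
        + ip u (y - A.transpose.mulVec (A.mulVec y - b)))
      - (-(1:ℝ)/2 * Q y + 1/2 * Q (A.mulVec y - b)
        + ip y (y - A.transpose.mulVec (A.mulVec y - b)))
      = 1/2 * Q (A.mulVec (u - y)) - 1/2 * Q (u - y) := by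
  have h1 : ip u (y - A.transpose.mulVec (A.mulVec y - b))
      = ip u y - (ip (A.mulVec u) (A.mulVec y) - ip (A.mulVec u) b) := by
    rw [ip_sub_right, adj, ip_sub_right]
  have h2 : ip y (y - A.transpose.mulVec (A.mulVec y - b))
      = Q y - (ip (A.mulVec y) (A.mulVec y) - ip (A.mulVec y) b) := by
    rw [ip_sub_right, adj, ip_sub_right, ip_self]
  rw [h1, h2, Matrix.mulVec_sub, Q_sub u y, Q_sub (A.mulVec u) b, Q_sub (A.mulVec y) b,
    Q_sub (A.mulVec u) (A.mulVec y), ip_self]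
  ring

/-! ### Spectral norm facts -/

lemma spec_bdd {m n : ℕ} (A : Matrix (Fin m) (Fin n) ℝ) :
    BddAbove {c | ∃ v : Fin n → ℝ, l2 v ≤ 1 ∧ c = l2 (A.mulVec v)} := by
  refine ⟨Real.sqrt (∑ i, ∑ j, A i j ^ 2), ?_⟩
  rintro c ⟨v, hv, rfl⟩
  unfold l2 at hv ⊢
  apply Real.sqrt_le_sqrt
  have hv2 : (∑ j, v j ^ 2) ≤ 1 := by
    have h1 : Real.sqrt (∑ j, v j ^ 2) ^ 2 = ∑ j, v j ^ 2 :=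
      Real.sq_sqrt (Finset.sum_nonneg fun j _ => sq_nonneg (v j))
    nlinarith [Real.sqrt_nonneg (∑ j, v j ^ 2)]
  refine Finset.sum_le_sum fun i _ => ?_
  have hmv : A.mulVec v i = ∑ j, A i j * v j := by
    simp [Matrix.mulVec, dotProduct]
  have hcs := Finset.sum_mul_sq_le_sq_mul_sq Finset.univ (fun j => A i j) v
  have hAnn : (0:ℝ) ≤ ∑ j, A i j ^ 2 := Finset.sum_nonneg fun j _ => sq_nonneg _
  rw [hmv]
  nlinarith

lemma specNorm_nonneg {m n : ℕ} (A : Matrix (Fin m) (Fin n) ℝ) : 0 ≤ specNorm A := by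
  refine le_csSup (spec_bdd A) ⟨0, ?_, ?_⟩
  · simp [l2]
  · simp [l2, Matrix.mulVec_zero]

lemma l2_smul {k : ℕ} (c : ℝ) (v : Fin k → ℝ) : l2 (c • v) = |c| * l2 v := by
  unfold l2
  rw [← Real.sqrt_sq_eq_abs, ← Real.sqrt_mul (sq_nonneg c)]
  congr 1
  rw [Finset.mul_sum]
  exact Finset.sum_congr rfl fun i _ => by simp [Pi.smul_apply, smul_eq_mul]; ring

lemma l2_bound {m n : ℕ} (A : Matrix (Fin m) (Fin n) ℝ) (v : Fin n → ℝ) :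
    l2 (A.mulVec v) ≤ specNorm A * l2 v := by
  rcases eq_or_lt_of_le (l2_nonneg v) with h | h
  · have hQ : Q v = 0 := by rw [← l2_sq, ← h]; ring
    have hv : v = 0 := by
      funext i
      have h1 : ∀ j ∈ Finset.univ (α := Fin n), (0:ℝ) ≤ v j ^ 2 := fun j _ => sq_nonneg _
      have h2 := (Finset.sum_eq_zero_iff_of_nonneg h1).1 hQ i (Finset.mem_univ i)
      exact pow_eq_zero_iff (n := 2) (by norm_num) |>.1 h2
    subst hv
    rw [Matrix.mulVec_zero]
    simp [l2]
  · have hinv : (0:ℝ) ≤ (l2 v)⁻¹ := inv_nonneg.2 (l2_nonneg v)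
    have hmem : l2 (A.mulVec ((l2 v)⁻¹ • v))
        ∈ {c | ∃ w : Fin n → ℝ, l2 w ≤ 1 ∧ c = l2 (A.mulVec w)} := by
      refine ⟨(l2 v)⁻¹ • v, ?_, rfl⟩
      rw [l2_smul, abs_of_nonneg hinv, inv_mul_cancel₀ (ne_of_gt h)]
    have hle := le_csSup (spec_bdd A) hmem
    rw [Matrix.mulVec_smul, l2_smul, abs_of_nonneg hinv] at hle
    have h3 := mul_le_mul_of_nonneg_left hle h.le
    rw [← mul_assoc, mul_inv_cancel₀ (ne_of_gt h), one_mul] at h3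
    have h4 : l2 (A.mulVec v) ≤ l2 v * specNorm A := h3
    rw [mul_comm]
    exact h4

lemma QA_bound {m n : ℕ} (A : Matrix (Fin m) (Fin n) ℝ) (d : Fin n → ℝ) :
    Q (A.mulVec d) ≤ specNorm A ^ 2 * Q d := by
  have h2 : l2 (A.mulVec d) ^ 2 ≤ (specNorm A * l2 d) ^ 2 :=
    pow_le_pow_left₀ (l2_nonneg _) (l2_bound A d) 2
  rw [mul_pow, l2_sq, l2_sq] at h2
  exact h2

/-! ### Expansion of the objective and the key descent step -/

lemma Fp_expand {lam p : ℝ} (hlam : 0 < lam) {m n : ℕ}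
    (A : Matrix (Fin m) (Fin n) ℝ) (b : Fin m → ℝ) (w : Fin n → ℝ) :
    Fp lam p A b w
      = (∑ i, pfstar lam p |w i|) - 1/2 * Q w + 1/2 * Q (A.mulVec w - b) := by
  unfold Fp Gp
  rw [l2_sq, Finset.mul_sum]
  rw [Finset.sum_congr rfl fun i (_ : i ∈ Finset.univ) => lam_gp hlam (w i),
    Finset.sum_sub_distrib]
  unfold Q
  rw [← Finset.sum_div]
  ring

lemma Q_pos_of_ne {k : ℕ} {u v : Fin k → ℝ} (h : u ≠ v) : 0 < Q (u - v) := by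
  rcases (Q_nonneg (u - v)).lt_or_eq with hlt | heq
  · exact hlt
  · exfalso
    apply h
    funext i
    have h1 : ∀ j ∈ Finset.univ (α := Fin k), (0:ℝ) ≤ ((u - v) j) ^ 2 :=
      fun j _ => sq_nonneg _
    have h2 := (Finset.sum_eq_zero_iff_of_nonneg h1).1 heq.symm i (Finset.mem_univ i)
    have h3 : (u - v) i = 0 := pow_eq_zero_iff (n := 2) (by norm_num) |>.1 h2
    rw [Pi.sub_apply] at h3
    linarith

lemma key_step {lam p : ℝ} (hlam : 0 < lam) (hp : p < 1) {m n : ℕ}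
    (A : Matrix (Fin m) (Fin n) ℝ) (b : Fin m → ℝ) (y : Fin n → ℝ) :
    Fp lam p A b (Sp lam p (y - A.transpose.mulVec (A.mulVec y - b)))
      + (1 - specNorm A ^ 2) / 2
          * Q (Sp lam p (y - A.transpose.mulVec (A.mulVec y - b)) - y)
      ≤ Fp lam p A b y := by
  set z := y - A.transpose.mulVec (A.mulVec y - b) with hz
  set u := Sp lam p z with hu
  have hΦ : (∑ i, (pfstar lam p |u i| - u i * z i))
      ≤ ∑ i, (pfstar lam p |y i| - y i * z i) := by
    refine Finset.sum_le_sum fun i _ => ?_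
    have hui : u i = pshrinkFun lam p |z i| * Real.sign (z i) := rfl
    rw [hui]
    exact coord_min hlam hp (z i) (y i)
  have hsum_u : (∑ i, (pfstar lam p |u i| - u i * z i))
      = (∑ i, pfstar lam p |u i|) - ip u z := by
    rw [Finset.sum_sub_distrib]; rfl
  have hsum_y : (∑ i, (pfstar lam p |y i| - y i * z i))
      = (∑ i, pfstar lam p |y i|) - ip y z := by
    rw [Finset.sum_sub_distrib]; rfl
  have hquad := quad_id A b u y
  rw [← hz] at hquad
  have hAd := QA_bound A (u - y)
  have hexp_u := Fp_expand (p := p) hlam A b u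
  have hexp_y := Fp_expand (p := p) hlam A b y
  rw [hsum_u] at hΦ
  rw [hsum_y] at hΦ
  have hc : (1 - specNorm A ^ 2) / 2 * Q (u - y)
      = 1/2 * Q (u - y) - 1/2 * (specNorm A ^ 2 * Q (u - y)) := by ring
  linarith

end Stmt14Aux

open Stmt14Aux

/-- monotone decrease of `F_p` along the IPS iteration, and vanishing steps. -/
theorem stmt14 (lam p : ℝ) (hlam : 0 < lam) (hp : p < 1)
    {m n : ℕ} (A : Matrix (Fin m) (Fin n) ℝ) (hA : specNorm A < 1)
    (b : Fin m → ℝ) (x : ℕ → Fin n → ℝ)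
    (hiter : ∀ k : ℕ,
      x (k + 1) = Sp lam p (x k - A.transpose.mulVec (A.mulVec (x k) - b))) :
    (∀ k : ℕ, Fp lam p A b (x (k + 1)) ≤ Fp lam p A b (x k)) ∧
    (∀ k : ℕ, x (k + 1) ≠ x k → Fp lam p A b (x (k + 1)) < Fp lam p A b (x k)) ∧
    Filter.Tendsto (fun k : ℕ => l2 (x (k + 1) - x k)) Filter.atTop (nhds 0) := by
  have hA0 : 0 ≤ specNorm A := specNorm_nonneg A
  set c : ℝ := (1 - specNorm A ^ 2) / 2 with hc
  have hc0 : 0 < c := by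
    have : specNorm A ^ 2 < 1 := by nlinarith
    rw [hc]; linarith
  have key : ∀ k : ℕ,
      Fp lam p A b (x (k + 1)) + c * Q (x (k + 1) - x k) ≤ Fp lam p A b (x k) := by
    intro k
    rw [hiter k]
    exact key_step hlam hp A b (x k)
  have hF0 : ∀ w : Fin n → ℝ, 0 ≤ Fp lam p A b w := by
    intro w
    unfold Fp
    have h1 : 0 ≤ Gp lam p w := Finset.sum_nonneg fun i _ => gp_nonneg hlam hp (w i)
    have h2 : 0 ≤ (l2 (A.mulVec w - b)) ^ 2 := sq_nonneg _
    nlinarith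
  refine ⟨?_, ?_, ?_⟩
  · intro k
    have := key k
    have h2 := mul_nonneg hc0.le (Q_nonneg (x (k + 1) - x k))
    linarith
  · intro k hne
    have := key k
    have h2 := mul_pos hc0 (Q_pos_of_ne hne)
    linarith
  · have hpartial : ∀ N : ℕ,
        (∑ k ∈ Finset.range N, c * Q (x (k + 1) - x k)) ≤ Fp lam p A b (x 0) := by
      intro N
      have hstep : ∀ N : ℕ,
          (∑ k ∈ Finset.range N, c * Q (x (k + 1) - x k))
            ≤ Fp lam p A b (x 0) - Fp lam p A b (x N) := by
        intro N
        induction N with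
        | zero => simp
        | succ N ih =>
          rw [Finset.sum_range_succ]
          have := key N
          linarith
      have := hstep N
      have := hF0 (x N)
      linarith
    have hsummable : Summable (fun k : ℕ => c * Q (x (k + 1) - x k)) :=
      summable_of_sum_range_le
        (fun k => mul_nonneg hc0.le (Q_nonneg (x (k + 1) - x k))) hpartial
    have h1 : Tendsto (fun k : ℕ => c * Q (x (k + 1) - x k)) atTop (nhds 0) :=
      hsummable.tendsto_atTop_zero
    have h2 : Tendsto (fun k : ℕ => Q (x (k + 1) - x k)) atTop (nhds 0) := by
      have h3 := h1.const_mul c⁻¹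
      rw [mul_zero] at h3
      have h4 : (fun k : ℕ => c⁻¹ * (c * Q (x (k + 1) - x k)))
          = fun k : ℕ => Q (x (k + 1) - x k) := by
        funext k
        rw [← mul_assoc, inv_mul_cancel₀ hc0.ne', one_mul]
      rwa [h4] at h3
    have hs : Tendsto Real.sqrt (nhds 0) (nhds 0) := by
      have := Real.continuous_sqrt.tendsto 0
      rwa [Real.sqrt_zero] at this
    have h5 := hs.comp h2
    have h6 : (Real.sqrt ∘ fun k : ℕ => Q (x (k + 1) - x k))
        = fun k : ℕ => l2 (x (k + 1) - x k) := by
      funext k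
      simp [Function.comp, l2, Q]
    rwa [h6] at h5

end
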